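/- a(q) − a(q⁴) = 6q ψ(q²)ψ(q⁶), where a is the Borwein theta function and ψ(q)=∑_{n≥0}q^{n(n+1)/2}; equivalently ½(a(q)−a(−q)) = 3θ₂(q)θ₂(q³)/2. -/

import Mathlib

open Function

namespace BorweinAux

/-- The quadratic form. -/
def Qe (p : ℤ × ℤ) : ℤ := p.1 ^ 2 + p.1 * p.2 + p.2 ^ 2

lemma habsQ (p : ℤ × ℤ) : |p.1| + |p.2| - 1 ≤ Qe p := by
  obtain ⟨a, b⟩ := p
  simp only [Qe]
  rcases abs_cases a with ⟨h1, _⟩ | ⟨h1, _⟩ <;> rcases abs_cases b with ⟨h2, _⟩ | ⟨h2, _⟩ <;>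
    nlinarith [sq_nonneg (a + b), sq_nonneg (a - 1), sq_nonneg (b - 1), sq_nonneg (a + 1),
      sq_nonneg (b + 1)]

lemma habsB (p : ℤ × ℤ) : |p.1| + |p.2| - 1 ≤ p.1 * (p.1 + 1) + 3 * (p.2 * (p.2 + 1)) + 1 := by
  obtain ⟨a, b⟩ := p
  rcases abs_cases a with ⟨h1, _⟩ | ⟨h1, _⟩ <;> rcases abs_cases b with ⟨h2, _⟩ | ⟨h2, _⟩ <;>
    nlinarith [sq_nonneg (a + 1), sq_nonneg (b + 1), sq_nonneg a, sq_nonneg b]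

lemma habs1 (a : ℤ) : |a| - 1 ≤ a * (a + 1) := by
  rcases abs_cases a with ⟨h1, _⟩ | ⟨h1, _⟩ <;> nlinarith [sq_nonneg (a + 1), sq_nonneg a]

lemma habs3 (a : ℤ) : |a| - 1 ≤ 3 * (a * (a + 1)) := by
  rcases abs_cases a with ⟨h1, _⟩ | ⟨h1, _⟩ <;> nlinarith [sq_nonneg (a + 1), sq_nonneg a]

lemma summable_int_geom {r : ℝ} (h0 : 0 ≤ r) (h1 : r < 1) :
    Summable fun a : ℤ => r ^ a.natAbs := by
  apply Summable.of_nat_of_neg_add_one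
  · simpa using summable_geometric_of_lt_one h0 h1
  · have h : (fun n : ℕ => r ^ ((-((n : ℤ) + 1)).natAbs)) = fun n : ℕ => r * r ^ n := by
      funext n
      have hn : (-((n : ℤ) + 1)).natAbs = n + 1 := by omega
      rw [hn, pow_succ]; ring
    rw [h]
    exact (summable_geometric_of_lt_one h0 h1).mul_left r

lemma summable_zpow_int {q : ℂ} (hq : ‖q‖ < 1) (hq0 : q ≠ 0) (E : ℤ → ℤ)
    (hE : ∀ a : ℤ, |a| - 1 ≤ E a) : Summable fun a : ℤ => q ^ E a := by
  have h0 : (0 : ℝ) < ‖q‖ := norm_pos_iff.mpr hq0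
  apply Summable.of_norm
  have hgsum : Summable fun a : ℤ => ‖q‖⁻¹ * ‖q‖ ^ a.natAbs :=
    (summable_int_geom h0.le hq).mul_left _
  refine Summable.of_nonneg_of_le (fun a => norm_nonneg _) (fun a => ?_) hgsum
  rw [norm_zpow]
  calc ‖q‖ ^ E a ≤ ‖q‖ ^ (|a| - 1) :=
        zpow_le_zpow_right_of_le_one₀ h0 hq.le (hE a)
    _ = ‖q‖⁻¹ * ‖q‖ ^ a.natAbs := by
        rw [zpow_sub₀ h0.ne', zpow_one, Int.abs_eq_natAbs, zpow_natCast]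
        ring

lemma summable_zpow_int2 {q : ℂ} (hq : ‖q‖ < 1) (hq0 : q ≠ 0) (E : ℤ × ℤ → ℤ)
    (hE : ∀ p : ℤ × ℤ, |p.1| + |p.2| - 1 ≤ E p) : Summable fun p : ℤ × ℤ => q ^ E p := by
  have h0 : (0 : ℝ) < ‖q‖ := norm_pos_iff.mpr hq0
  apply Summable.of_norm
  have hgsum : Summable fun p : ℤ × ℤ => ‖q‖⁻¹ * (‖q‖ ^ p.1.natAbs * ‖q‖ ^ p.2.natAbs) :=
    (((summable_int_geom h0.le hq).mul_of_nonneg (summable_int_geom h0.le hq)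
      (fun a => pow_nonneg h0.le _) (fun a => pow_nonneg h0.le _))).mul_left _
  refine Summable.of_nonneg_of_le (fun p => norm_nonneg _) (fun p => ?_) hgsum
  rw [norm_zpow]
  calc ‖q‖ ^ E p ≤ ‖q‖ ^ (|p.1| + |p.2| - 1) :=
        zpow_le_zpow_right_of_le_one₀ h0 hq.le (hE p)
    _ = ‖q‖⁻¹ * (‖q‖ ^ p.1.natAbs * ‖q‖ ^ p.2.natAbs) := by
        rw [zpow_sub₀ h0.ne', zpow_add₀ h0.ne', zpow_one, Int.abs_eq_natAbs,
          Int.abs_eq_natAbs, zpow_natCast, zpow_natCast]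
        ring

def SA : Set (ℤ × ℤ) := {p | 2 ∣ p.1 ∧ 2 ∣ p.2}
def SB : Set (ℤ × ℤ) := {p | ¬ 2 ∣ p.2}
def SOE : Set (ℤ × ℤ) := {p | ¬ 2 ∣ p.1 ∧ 2 ∣ p.2}
def SEO : Set (ℤ × ℤ) := {p | 2 ∣ p.1 ∧ ¬ 2 ∣ p.2}
def SOO : Set (ℤ × ℤ) := {p | ¬ 2 ∣ p.1 ∧ ¬ 2 ∣ p.2}

def eA : (ℤ × ℤ) ≃ SA where
  toFun p := ⟨(2 * p.1, 2 * p.2), by simp only [SA, Set.mem_setOf_eq]; omega⟩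
  invFun p := (p.1.1 / 2, p.1.2 / 2)
  left_inv p := by obtain ⟨a, b⟩ := p; simp only [Prod.mk.injEq]; omega
  right_inv p := by
    obtain ⟨⟨a, b⟩, h⟩ := p
    simp only [SA, Set.mem_setOf_eq] at h
    apply Subtype.ext
    simp only [Prod.mk.injEq]
    omega

def eB : (ℤ × ℤ) ≃ SB where
  toFun p := ⟨(p.1 - p.2, 2 * p.2 + 1), by simp only [SB, Set.mem_setOf_eq]; omega⟩
  invFun p := (p.1.1 + (p.1.2 - 1) / 2, (p.1.2 - 1) / 2)
  left_inv p := by obtain ⟨a, t⟩ := p; simp only [Prod.mk.injEq]; omega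
  right_inv p := by
    obtain ⟨⟨m, n⟩, h⟩ := p
    simp only [SB, Set.mem_setOf_eq] at h
    apply Subtype.ext
    simp only [Prod.mk.injEq]
    omega

def eEO : SEO ≃ SOO where
  toFun p := ⟨(p.1.1 + p.1.2, -p.1.2), by
    obtain ⟨⟨m, n⟩, h⟩ := p
    simp only [SEO, Set.mem_setOf_eq] at h
    simp only [SOO, Set.mem_setOf_eq]
    omega⟩
  invFun p := ⟨(p.1.1 + p.1.2, -p.1.2), by
    obtain ⟨⟨m, n⟩, h⟩ := p
    simp only [SOO, Set.mem_setOf_eq] at h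
    simp only [SEO, Set.mem_setOf_eq]
    omega⟩
  left_inv p := by
    obtain ⟨⟨m, n⟩, h⟩ := p
    apply Subtype.ext
    simp only [Prod.mk.injEq]
    omega
  right_inv p := by
    obtain ⟨⟨m, n⟩, h⟩ := p
    apply Subtype.ext
    simp only [Prod.mk.injEq]
    omega

def eOE : SOE ≃ SOO where
  toFun p := ⟨(p.1.1 + p.1.2, -p.1.1), by
    obtain ⟨⟨m, n⟩, h⟩ := p
    simp only [SOE, Set.mem_setOf_eq] at h
    simp only [SOO, Set.mem_setOf_eq]
    omega⟩
  invFun p := ⟨(-p.1.2, p.1.1 + p.1.2), by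
    obtain ⟨⟨m, n⟩, h⟩ := p
    simp only [SOO, Set.mem_setOf_eq] at h
    simp only [SOE, Set.mem_setOf_eq]
    omega⟩
  left_inv p := by
    obtain ⟨⟨m, n⟩, h⟩ := p
    apply Subtype.ext
    simp only [Prod.mk.injEq]
    omega
  right_inv p := by
    obtain ⟨⟨m, n⟩, h⟩ := p
    apply Subtype.ext
    simp only [Prod.mk.injEq]
    omega

end BorweinAux

/-- The Borwein cubic theta function `a(q) = ∑_{m,n ∈ ℤ} q^(m²+mn+n²)`. -/
noncomputable def borweinA (q : ℂ) : ℂ :=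
  ∑' p : ℤ × ℤ, q ^ (p.1 ^ 2 + p.1 * p.2 + p.2 ^ 2)

/-- Ramanujan's theta function `ψ(q) = ∑_{n≥0} q^(n(n+1)/2)`. -/
noncomputable def rpsi (q : ℂ) : ℂ := ∑' n : ℕ, q ^ (n * (n + 1) / 2)

set_option maxHeartbeats 1000000 in
open BorweinAux in
/-- `a(q) − a(q⁴) = 6q ψ(q²) ψ(q⁶)`. -/
theorem borweinA_sub (q : ℂ) (hq : ‖q‖ < 1) :
    borweinA q - borweinA (q ^ 4) = 6 * q * rpsi (q ^ 2) * rpsi (q ^ 6) := by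
  rcases eq_or_ne q 0 with rfl | hq0
  · -- trivial case q = 0
    have hA : borweinA 0 = 1 := by
      rw [borweinA, tsum_eq_single ((0, 0) : ℤ × ℤ) ?_]
      · norm_num
      · intro p hp
        apply zero_zpow
        intro hc
        apply hp
        obtain ⟨x, y⟩ := p
        simp only at hc
        have h1 : y = 0 := by nlinarith [sq_nonneg (2 * x + y), sq_nonneg y, sq_nonneg (2 * y + x)]
        have h2 : x = 0 := by nlinarith [sq_nonneg (2 * x + y), sq_nonneg x, sq_nonneg (2 * y + x)]
        rw [h1, h2]
    have e4 : (0 : ℂ) ^ 4 = 0 := by norm_num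
    rw [e4, hA]
    ring
  · have hsum : Summable fun p : ℤ × ℤ => q ^ Qe p := summable_zpow_int2 hq hq0 _ habsQ
    -- split off the even-even part
    have hsplit : (∑' p : SA, q ^ Qe (p : ℤ × ℤ)) + (∑' p : ↥SAᶜ, q ^ Qe (p : ℤ × ℤ))
        = ∑' p : ℤ × ℤ, q ^ Qe p :=
      Summable.tsum_add_tsum_compl (hsum.subtype _) (hsum.subtype _)
    have hA : (∑' p : SA, q ^ Qe (p : ℤ × ℤ)) = borweinA (q ^ 4) := by
      rw [← eA.tsum_eq (fun p : SA => q ^ Qe (p : ℤ × ℤ)), borweinA]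
      apply tsum_congr
      intro p
      show q ^ Qe ((2 * p.1, 2 * p.2) : ℤ × ℤ) = (q ^ 4) ^ (p.1 ^ 2 + p.1 * p.2 + p.2 ^ 2)
      have h4 : Qe ((2 * p.1, 2 * p.2) : ℤ × ℤ) = 4 * (p.1 ^ 2 + p.1 * p.2 + p.2 ^ 2) := by
        simp only [Qe]; ring
      rw [h4, zpow_mul, show ((4 : ℤ)) = ((4 : ℕ) : ℤ) from rfl, zpow_natCast]
    -- decompose the complement
    have hAc : SAᶜ = SOE ∪ SB := by
      ext p
      simp only [SA, SB, SOE, Set.mem_compl_iff, Set.mem_setOf_eq, Set.mem_union]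
      omega
    have hdOEB : Disjoint SOE SB := by
      rw [Set.disjoint_left]
      rintro ⟨m, n⟩ h1 h2
      simp only [SOE, Set.mem_setOf_eq] at h1
      simp only [SB, Set.mem_setOf_eq] at h2
      exact h2 h1.2
    have h3 : (∑' p : ↥SAᶜ, q ^ Qe (p : ℤ × ℤ))
        = (∑' p : SOE, q ^ Qe (p : ℤ × ℤ)) + ∑' p : SB, q ^ Qe (p : ℤ × ℤ) := by
      have h := Summable.tsum_union_disjoint (f := fun p : ℤ × ℤ => q ^ Qe p) hdOEB
        (hsum.subtype _) (hsum.subtype _)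
      rw [hAc]
      exact h
    have hBsplit : SB = SEO ∪ SOO := by
      ext p
      simp only [SB, SEO, SOO, Set.mem_setOf_eq, Set.mem_union]
      omega
    have hdEOOO : Disjoint SEO SOO := by
      rw [Set.disjoint_left]
      rintro ⟨m, n⟩ h1 h2
      simp only [SEO, Set.mem_setOf_eq] at h1
      simp only [SOO, Set.mem_setOf_eq] at h2
      exact h2.1 h1.1
    have h4 : (∑' p : SB, q ^ Qe (p : ℤ × ℤ))
        = (∑' p : SEO, q ^ Qe (p : ℤ × ℤ)) + ∑' p : SOO, q ^ Qe (p : ℤ × ℤ) := by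
      have h := Summable.tsum_union_disjoint (f := fun p : ℤ × ℤ => q ^ Qe p) hdEOOO
        (hsum.subtype _) (hsum.subtype _)
      rw [hBsplit]
      exact h
    have hEO : (∑' p : SEO, q ^ Qe (p : ℤ × ℤ)) = ∑' p : SOO, q ^ Qe (p : ℤ × ℤ) := by
      rw [← eEO.tsum_eq (fun p : SOO => q ^ Qe (p : ℤ × ℤ))]
      apply tsum_congr
      intro p
      congr 1
      obtain ⟨⟨m, n⟩, h⟩ := p
      show Qe ((m, n) : ℤ × ℤ) = Qe ((m + n, -n) : ℤ × ℤ)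
      simp only [Qe]
      ring
    have hOE : (∑' p : SOE, q ^ Qe (p : ℤ × ℤ)) = ∑' p : SOO, q ^ Qe (p : ℤ × ℤ) := by
      rw [← eOE.tsum_eq (fun p : SOO => q ^ Qe (p : ℤ × ℤ))]
      apply tsum_congr
      intro p
      congr 1
      obtain ⟨⟨m, n⟩, h⟩ := p
      show Qe ((m, n) : ℤ × ℤ) = Qe ((m + n, -m) : ℤ × ℤ)
      simp only [Qe]
      ring
    -- compute the ψ-type sums
    have hD : (∑' a : ℤ, q ^ (a * (a + 1))) = 2 * rpsi (q ^ 2) := by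
      have hsZ : Summable fun a : ℤ => q ^ (a * (a + 1)) := summable_zpow_int hq hq0 _ habs1
      have h1 : Summable fun n : ℕ => q ^ ((n : ℤ) * ((n : ℤ) + 1)) :=
        (hsZ.comp_injective (Nat.cast_injective (R := ℤ))).congr (fun b => rfl)
      have h2 : Summable fun n : ℕ => q ^ ((-((n : ℤ) + 1)) * (-((n : ℤ) + 1) + 1)) :=
        (hsZ.comp_injective (i := fun n : ℕ => -((n : ℤ) + 1))
          (fun a b h => by simpa using h)).congr (fun b => rfl)
      rw [tsum_of_nat_of_neg_add_one (f := fun a : ℤ => q ^ (a * (a + 1))) h1 h2]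
      have e1 : ∀ n : ℕ, q ^ ((-((n : ℤ) + 1)) * (-((n : ℤ) + 1) + 1))
          = q ^ ((n : ℤ) * ((n : ℤ) + 1)) := fun n => by congr 1; ring
      rw [tsum_congr e1]
      have e2 : ∀ n : ℕ, q ^ ((n : ℤ) * ((n : ℤ) + 1)) = (q ^ 2) ^ (n * (n + 1) / 2) := by
        intro n
        obtain ⟨m, hm⟩ := Nat.even_mul_succ_self n
        have hm' : ((n : ℤ)) * ((n : ℤ) + 1) = (m : ℤ) + (m : ℤ) := by exact_mod_cast hm
        rw [hm]
        have hdiv : (m + m) / 2 = m := by omega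
        rw [hdiv, ← pow_mul, ← zpow_natCast q (2 * m), hm']
        congr 1
        push_cast
        ring
      rw [tsum_congr e2, rpsi]
      ring
    have hC : (∑' t : ℤ, q ^ (3 * (t * (t + 1)))) = 2 * rpsi (q ^ 6) := by
      have hsZ : Summable fun a : ℤ => q ^ (3 * (a * (a + 1))) := summable_zpow_int hq hq0 _ habs3
      have h1 : Summable fun n : ℕ => q ^ (3 * ((n : ℤ) * ((n : ℤ) + 1))) :=
        (hsZ.comp_injective (Nat.cast_injective (R := ℤ))).congr (fun b => rfl)
      have h2 : Summable fun n : ℕ => q ^ (3 * ((-((n : ℤ) + 1)) * (-((n : ℤ) + 1) + 1))) :=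
        (hsZ.comp_injective (i := fun n : ℕ => -((n : ℤ) + 1))
          (fun a b h => by simpa using h)).congr (fun b => rfl)
      rw [tsum_of_nat_of_neg_add_one (f := fun a : ℤ => q ^ (3 * (a * (a + 1)))) h1 h2]
      have e1 : ∀ n : ℕ, q ^ (3 * ((-((n : ℤ) + 1)) * (-((n : ℤ) + 1) + 1)))
          = q ^ (3 * ((n : ℤ) * ((n : ℤ) + 1))) := fun n => by congr 1; ring
      rw [tsum_congr e1]
      have e2 : ∀ n : ℕ, q ^ (3 * ((n : ℤ) * ((n : ℤ) + 1))) = (q ^ 6) ^ (n * (n + 1) / 2) := by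
        intro n
        obtain ⟨m, hm⟩ := Nat.even_mul_succ_self n
        have hm' : ((n : ℤ)) * ((n : ℤ) + 1) = (m : ℤ) + (m : ℤ) := by exact_mod_cast hm
        rw [hm]
        have hdiv : (m + m) / 2 = m := by omega
        rw [hdiv, ← pow_mul, ← zpow_natCast q (6 * m), hm']
        congr 1
        push_cast
        ring
      rw [tsum_congr e2, rpsi]
      ring
    -- the B sum
    have hBsum2 : Summable (fun p : ℤ × ℤ => q ^ (p.1 * (p.1 + 1) + 3 * (p.2 * (p.2 + 1)) + 1)) :=
      summable_zpow_int2 hq hq0 _ habsB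
    have hB : (∑' p : SB, q ^ Qe (p : ℤ × ℤ)) = 4 * (q * (rpsi (q ^ 2) * rpsi (q ^ 6))) := by
      rw [← eB.tsum_eq (fun p : SB => q ^ Qe (p : ℤ × ℤ))]
      have hpt : ∀ p : ℤ × ℤ, q ^ Qe ((eB p : ℤ × ℤ))
          = q ^ (p.1 * (p.1 + 1) + 3 * (p.2 * (p.2 + 1)) + 1) := by
        intro p
        congr 1
        show Qe ((p.1 - p.2, 2 * p.2 + 1) : ℤ × ℤ) = _
        simp only [Qe]
        ring
      rw [tsum_congr hpt, Summable.tsum_prod' hBsum2 hBsum2.prod_factor]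
      calc ∑' (a : ℤ), ∑' (t : ℤ), q ^ (a * (a + 1) + 3 * (t * (t + 1)) + 1)
          = ∑' (a : ℤ), (q ^ (a * (a + 1)) * q) * ∑' (t : ℤ), q ^ (3 * (t * (t + 1))) := by
            apply tsum_congr
            intro a
            rw [← tsum_mul_left]
            apply tsum_congr
            intro t
            rw [zpow_add₀ hq0, zpow_add₀ hq0, zpow_one]
            ring
        _ = (∑' (a : ℤ), q ^ (a * (a + 1)) * q) * ∑' (t : ℤ), q ^ (3 * (t * (t + 1))) :=
            tsum_mul_right
        _ = ((∑' (a : ℤ), q ^ (a * (a + 1))) * q) * ∑' (t : ℤ), q ^ (3 * (t * (t + 1))) := by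
            rw [tsum_mul_right]
        _ = 4 * (q * (rpsi (q ^ 2) * rpsi (q ^ 6))) := by
            rw [hC, hD]; ring
    -- the OO sum
    have hOO : (∑' p : SOO, q ^ Qe (p : ℤ × ℤ)) = 2 * (q * (rpsi (q ^ 2) * rpsi (q ^ 6))) := by
      rw [hEO] at h4
      rw [hB] at h4
      linear_combination (-1 / 2 : ℂ) * h4
    -- assemble
    have hgoal : borweinA q = ∑' p : ℤ × ℤ, q ^ Qe p := rfl
    rw [hgoal, ← hsplit, hA, h3, hOE, hOO, hB]
    ring
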